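/- Let D ⊆ ℝ² be open and let q, r, q̄, r̄, φ : D → ℂ be C² functions satisfying the mPLR system. Then on D the functions q̄ and r̄ satisfy the second-order system ∂²q̄/∂t∂t̄ = 4q̄ + 4q̄r̄·(∂q̄/∂t) and ∂²r̄/∂t∂t̄ = 4r̄ − 4q̄r̄·(∂r̄/∂t). -/

import Mathlib

/-- Partial derivative with respect to the first coordinate `t`. -/
noncomputable def pd1 (f : ℝ × ℝ → ℂ) : ℝ × ℝ → ℂ :=
  fun p => fderiv ℝ f p ((1 : ℝ), (0 : ℝ))

/-- Partial derivative with respect to the second coordinate `t̄`. -/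
noncomputable def pd2 (f : ℝ × ℝ → ℂ) : ℝ × ℝ → ℂ :=
  fun p => fderiv ℝ f p ((0 : ℝ), (1 : ℝ))

/-- The modified Pohlmeyer–Lund–Regge system on a set `D ⊆ ℝ²`. -/
def mPLR (D : Set (ℝ × ℝ)) (q r qb rb φ : ℝ × ℝ → ℂ) : Prop :=
  ∀ p ∈ D,
    pd2 q p = -2 * qb p * Complex.exp (2 * φ p) ∧
    pd2 r p = 2 * rb p * Complex.exp (-2 * φ p) ∧
    pd1 φ p = 2 * q p * r p ∧
    pd2 φ p = -2 * qb p * rb p ∧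
    pd1 qb p = -2 * q p * Complex.exp (-2 * φ p) ∧
    pd1 rb p = 2 * r p * Complex.exp (2 * φ p)

/-- Clairaut for `pd1`/`pd2`. -/
lemma pd_comm (f : ℝ × ℝ → ℂ) (p : ℝ × ℝ) (hf : ContDiffAt ℝ 2 f p) :
    pd1 (pd2 f) p = pd2 (pd1 f) p := by
  have hd : DifferentiableAt ℝ (fderiv ℝ f) p :=
    (hf.fderiv_right (m := 1) (by norm_num)).differentiableAt one_ne_zero
  have hs := hf.isSymmSndFDerivAt minSmoothness_of_isRCLikeNormedField.le
  unfold pd1 pd2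
  rw [fderiv_clm_apply hd (differentiableAt_const _),
      fderiv_clm_apply hd (differentiableAt_const _)]
  simp [hs ((1 : ℝ), (0 : ℝ)) ((0 : ℝ), (1 : ℝ))]

lemma pd2_congr {f g : ℝ × ℝ → ℂ} {p : ℝ × ℝ} (h : f =ᶠ[nhds p] g) :
    pd2 f p = pd2 g p := by
  unfold pd2; rw [h.fderiv_eq]

lemma pd2_mul {f g : ℝ × ℝ → ℂ} {p : ℝ × ℝ}
    (hf : DifferentiableAt ℝ f p) (hg : DifferentiableAt ℝ g p) :
    pd2 (fun x => f x * g x) p = f p * pd2 g p + g p * pd2 f p := by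
  unfold pd2; rw [fderiv_fun_mul hf hg]; simp [smul_eq_mul]

lemma pd2_const_mul {f : ℝ × ℝ → ℂ} {p : ℝ × ℝ} (c : ℂ)
    (hf : DifferentiableAt ℝ f p) :
    pd2 (fun x => c * f x) p = c * pd2 f p := by
  unfold pd2; rw [fderiv_const_mul hf]; simp [smul_eq_mul]

lemma pd2_cexp {f : ℝ × ℝ → ℂ} {p : ℝ × ℝ} (hf : DifferentiableAt ℝ f p) :
    pd2 (fun x => Complex.exp (f x)) p = Complex.exp (f p) * pd2 f p := by
  unfold pd2; rw [hf.hasFDerivAt.cexp.fderiv]; simp [smul_eq_mul]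

theorem mPLR_second_order_qb_rb
    (D : Set (ℝ × ℝ)) (hD : IsOpen D) (q r qb rb φ : ℝ × ℝ → ℂ)
    (hq : ContDiffOn ℝ 2 q D) (hr : ContDiffOn ℝ 2 r D)
    (hqb : ContDiffOn ℝ 2 qb D) (hrb : ContDiffOn ℝ 2 rb D)
    (hφ : ContDiffOn ℝ 2 φ D)
    (h : mPLR D q r qb rb φ) :
    ∀ p ∈ D,
      pd1 (pd2 qb) p = 4 * qb p + 4 * qb p * rb p * pd1 qb p ∧
      pd1 (pd2 rb) p = 4 * rb p - 4 * qb p * rb p * pd1 rb p := by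
  intro p hp
  have hpD : D ∈ nhds p := hD.mem_nhds hp
  have hqd : DifferentiableAt ℝ q p :=
    (hq.contDiffAt hpD).differentiableAt two_ne_zero
  have hrd : DifferentiableAt ℝ r p :=
    (hr.contDiffAt hpD).differentiableAt two_ne_zero
  have hφd : DifferentiableAt ℝ φ p :=
    (hφ.contDiffAt hpD).differentiableAt two_ne_zero
  have hφd2 : DifferentiableAt ℝ (fun x => -2 * φ x) p := hφd.const_mul _
  have hφd2' : DifferentiableAt ℝ (fun x => 2 * φ x) p := hφd.const_mul _
  have hE : Complex.exp (-2 * φ p) * Complex.exp (2 * φ p) = 1 := by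
    rw [← Complex.exp_add]; ring_nf; exact Complex.exp_zero
  obtain ⟨hq2, hr2, hφ1, hφ2, hqb1, hrb1⟩ := h p hp
  constructor
  · have hcomm := pd_comm qb p (hqb.contDiffAt hpD)
    have heq : pd1 qb =ᶠ[nhds p]
        (fun x => -2 * q x * Complex.exp (-2 * φ x)) :=
      Filter.eventually_of_mem hpD (fun x hx => (h x hx).2.2.2.2.1)
    rw [hcomm, pd2_congr heq,
        pd2_mul (hqd.const_mul _) (hφd2.cexp),
        pd2_cexp hφd2, pd2_const_mul _ hqd, pd2_const_mul _ hφd,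
        hq2, hφ2, hqb1]
    linear_combination (4 * qb p) * hE
  · have hcomm := pd_comm rb p (hrb.contDiffAt hpD)
    have heq : pd1 rb =ᶠ[nhds p]
        (fun x => 2 * r x * Complex.exp (2 * φ x)) :=
      Filter.eventually_of_mem hpD (fun x hx => (h x hx).2.2.2.2.2)
    rw [hcomm, pd2_congr heq,
        pd2_mul (hrd.const_mul _) (hφd2'.cexp),
        pd2_cexp hφd2', pd2_const_mul _ hrd, pd2_const_mul _ hφd,
        hr2, hφ2, hrb1]
    linear_combination (4 * rb p) * hE
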